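/- Let K be an irreducible, aperiodic, substochastic kernel on a countable state space S with convergence parameter R = 1/ρ (i.e., ρ = lim (K^n(x,y))^{1/n} for all x,y). If for some x ∈ S there is a probability measure π_x on S with K^n(x,y)/K^n(x,S) → π_x(y) for all y ∈ S, then K^{n+1}(x,S)/K^n(x,S) → ρ. -/

import Mathlib

open Filter Topology

open scoped Classical in
/-- Matrix powers of a kernel `K` on a countable state space. -/
noncomputable def Kpow {S : Type*} (K : S → S → ℝ) : ℕ → S → S → ℝ
  | 0 => fun x y => if x = y then 1 else 0
  | n + 1 => fun x y => ∑' z, Kpow K n x z * K z y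

section Aux

variable {S : Type*} (K : S → S → ℝ)

lemma Kpow_succ (n : ℕ) (v y : S) :
    Kpow K (n + 1) v y = ∑' z, Kpow K n v z * K z y := rfl

lemma Kpow_nonneg (hnn : ∀ x y, 0 ≤ K x y) : ∀ (n : ℕ) (v y : S), 0 ≤ Kpow K n v y := by
  intro n
  induction n with
  | zero =>
      intro v y
      simp only [Kpow]
      split <;> norm_num
  | succ n ih =>
      intro v y
      exact tsum_nonneg fun z => mul_nonneg (ih v z) (hnn z y)

lemma Kpow_zero_row (w : S) (hrow : ∀ y, K w y = 0) :
    ∀ m : ℕ, 1 ≤ m → ∀ y, Kpow K m w y = 0 := by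
  intro m
  induction m with
  | zero => intro h; omega
  | succ m ih =>
      intro _ y
      rw [Kpow_succ]
      rcases Nat.eq_zero_or_pos m with h0 | hpos
      · subst h0
        have h : ∀ z : S, Kpow K 0 w z * K z y = 0 := by
          intro z
          by_cases h : w = z
          · subst h; rw [hrow y, mul_zero]
          · simp only [Kpow]
            rw [if_neg h, zero_mul]
        rw [tsum_congr h, tsum_zero]
      · have h : ∀ z : S, Kpow K m w z * K z y = 0 := fun z => by
          rw [ih hpos z, zero_mul]
        rw [tsum_congr h, tsum_zero]

lemma row_ne_zero (hnn : ∀ x y, 0 ≤ K x y)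
    (haper : ∀ x : S, ∀ m : ℕ, (∀ n, 0 < n → 0 < Kpow K n x x → m ∣ n) → m = 1)
    (w : S) : ∃ y, 0 < K w y := by
  by_contra h
  push_neg at h
  have hrow : ∀ y, K w y = 0 := fun y => le_antisymm (h y) (hnn w y)
  have h2 := haper w 2 (fun n hn hpos => by
    rw [Kpow_zero_row K w hrow n hn w] at hpos
    exact absurd hpos (lt_irrefl 0))
  norm_num at h2

lemma geo_lower (s : ℕ → ℝ) (b : ℝ) (hb : 0 ≤ b) (N : ℕ)
    (h : ∀ n, N ≤ n → b * s n ≤ s (n + 1)) : ∀ m : ℕ, s N * b ^ m ≤ s (N + m) := by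
  intro m
  induction m with
  | zero => simp
  | succ m ih =>
      calc s N * b ^ (m + 1) = b * (s N * b ^ m) := by ring
      _ ≤ b * s (N + m) := mul_le_mul_of_nonneg_left ih hb
      _ ≤ s (N + m + 1) := h (N + m) (Nat.le_add_right _ _)

lemma geo_upper (s : ℕ → ℝ) (b : ℝ) (hb : 0 ≤ b) (N : ℕ)
    (h : ∀ n, N ≤ n → s (n + 1) ≤ b * s n) : ∀ m : ℕ, s (N + m) ≤ s N * b ^ m := by
  intro m
  induction m with
  | zero => simp
  | succ m ih =>
      calc s (N + m + 1) ≤ b * s (N + m) := h (N + m) (Nat.le_add_right _ _)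
      _ ≤ b * (s N * b ^ m) := mul_le_mul_of_nonneg_left ih hb
      _ = s N * b ^ (m + 1) := by ring

lemma tendsto_rpow_inv_nat_one (c : ℝ) (hc : 0 < c) :
    Tendsto (fun n : ℕ => c ^ ((n : ℝ)⁻¹)) atTop (𝓝 1) := by
  have h1 : Tendsto (fun n : ℕ => Real.log c * (n : ℝ)⁻¹) atTop (𝓝 0) := by
    simpa using (tendsto_inv_atTop_nhds_zero_nat).const_mul (Real.log c)
  have h2 : Tendsto (fun n : ℕ => Real.exp (Real.log c * (n : ℝ)⁻¹)) atTop (𝓝 1) := by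
    simpa [Function.comp_def] using (Real.continuous_exp.continuousAt (x := 0)).tendsto.comp h1
  refine h2.congr fun n => ?_
  rw [Real.rpow_def_of_pos hc]

end Aux


lemma pow_rpow_inv (b : ℝ) (hb : 0 ≤ b) (n : ℕ) (hn : 1 ≤ n) :
    (b ^ n) ^ ((n : ℝ)⁻¹) = b := by
  rw [← Real.rpow_natCast b n, ← Real.rpow_mul hb,
    mul_inv_cancel₀ (Nat.cast_ne_zero.mpr (by omega)), Real.rpow_one]

lemma root_ge_of_ratio (s : ℕ → ℝ) (hs : ∀ n, 0 ≤ s n) (b : ℝ) (hb : 0 < b) (N : ℕ)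
    (hsN : 0 < s N) (h : ∀ n, N ≤ n → b * s n ≤ s (n + 1)) (ρ : ℝ)
    (hroot : Tendsto (fun n : ℕ => s n ^ ((n : ℝ)⁻¹)) atTop (𝓝 ρ)) : b ≤ ρ := by
  set C : ℝ := s N / b ^ N with hC
  have hCpos : 0 < C := div_pos hsN (pow_pos hb N)
  have hlow : ∀ n, N ≤ n → C * b ^ n ≤ s n := by
    intro n hn
    have h1 := geo_lower s b hb.le N h (n - N)
    rw [Nat.add_sub_cancel' hn] at h1
    refine le_trans (le_of_eq ?_) h1
    rw [pow_sub₀ b hb.ne' hn, hC]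
    field_simp
  have hev : ∀ᶠ n : ℕ in atTop, C ^ ((n : ℝ)⁻¹) * b ≤ s n ^ ((n : ℝ)⁻¹) := by
    filter_upwards [eventually_ge_atTop N, eventually_ge_atTop 1] with n hn h1
    have e1 : (C * b ^ n) ^ ((n : ℝ)⁻¹) = C ^ ((n : ℝ)⁻¹) * b := by
      rw [Real.mul_rpow hCpos.le (pow_nonneg hb.le n), pow_rpow_inv b hb.le n h1]
    rw [← e1]
    exact Real.rpow_le_rpow (by positivity) (hlow n hn) (by positivity)
  have hlim : Tendsto (fun n : ℕ => C ^ ((n : ℝ)⁻¹) * b) atTop (𝓝 b) := by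
    simpa using (tendsto_rpow_inv_nat_one C hCpos).mul_const b
  exact le_of_tendsto_of_tendsto hlim hroot hev

lemma root_le_of_ratio (s : ℕ → ℝ) (hs : ∀ n, 0 ≤ s n) (b : ℝ) (hb : 0 < b) (N : ℕ)
    (hsN : 0 < s N) (h : ∀ n, N ≤ n → s (n + 1) ≤ b * s n) (ρ : ℝ)
    (hroot : Tendsto (fun n : ℕ => s n ^ ((n : ℝ)⁻¹)) atTop (𝓝 ρ)) : ρ ≤ b := by
  set C : ℝ := s N / b ^ N with hC
  have hCpos : 0 < C := div_pos hsN (pow_pos hb N)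
  have hup : ∀ n, N ≤ n → s n ≤ C * b ^ n := by
    intro n hn
    have h1 := geo_upper s b hb.le N h (n - N)
    rw [Nat.add_sub_cancel' hn] at h1
    refine le_trans h1 (le_of_eq ?_)
    rw [pow_sub₀ b hb.ne' hn, hC]
    field_simp
  have hev : ∀ᶠ n : ℕ in atTop, s n ^ ((n : ℝ)⁻¹) ≤ C ^ ((n : ℝ)⁻¹) * b := by
    filter_upwards [eventually_ge_atTop N, eventually_ge_atTop 1] with n hn h1
    have e1 : (C * b ^ n) ^ ((n : ℝ)⁻¹) = C ^ ((n : ℝ)⁻¹) * b := by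
      rw [Real.mul_rpow hCpos.le (pow_nonneg hb.le n), pow_rpow_inv b hb.le n h1]
    rw [← e1]
    exact Real.rpow_le_rpow (hs n) (hup n hn) (by positivity)
  have hlim : Tendsto (fun n : ℕ => C ^ ((n : ℝ)⁻¹) * b) atTop (𝓝 b) := by
    simpa using (tendsto_rpow_inv_nat_one C hCpos).mul_const b
  exact le_of_tendsto_of_tendsto hroot hlim hev

/-- If an irreducible, aperiodic, substochastic kernel with convergence norm `ρ`
has a Yaglom limit `π` starting from `x`, then the one-step survival probabilities
`K^{n+1}(x,S)/K^n(x,S)` converge to `ρ`. -/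
theorem yaglom_survival_ratio {S : Type*} [Countable S] (K : S → S → ℝ)
    (hnn : ∀ x y, 0 ≤ K x y)
    (hsub : ∀ x, ∑' y, K x y ≤ 1)
    (hirr : ∀ x y : S, ∃ n, 0 < Kpow K n x y)
    (haper : ∀ x : S, ∀ m : ℕ, (∀ n, 0 < n → 0 < Kpow K n x x → m ∣ n) → m = 1)
    (ρ : ℝ) (hρpos : 0 < ρ) (hρle : ρ ≤ 1)
    (hρ : ∀ x y : S,
      Tendsto (fun n : ℕ => (Kpow K n x y) ^ ((n : ℝ)⁻¹)) atTop (𝓝 ρ))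
    (x : S) (π : S → ℝ) (hπnn : ∀ y, 0 ≤ π y) (hπ1 : ∑' y, π y = 1)
    (hyag : ∀ y : S,
      Tendsto (fun n : ℕ => Kpow K n x y / ∑' z, Kpow K n x z) atTop (𝓝 (π y))) :
    Tendsto (fun n : ℕ => (∑' z, Kpow K (n + 1) x z) / (∑' z, Kpow K n x z))
      atTop (𝓝 ρ) := by
  classical
  have hKnn : ∀ (n : ℕ) (v y : S), 0 ≤ Kpow K n v y := Kpow_nonneg K hnn
  have hs0 : ∀ n : ℕ, 0 ≤ ∑' z, Kpow K n x z := fun n => tsum_nonneg fun z => hKnn n x z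
  -- a state with positive limit mass
  obtain ⟨y₀, hy₀⟩ : ∃ y, 0 < π y := by
    by_contra h
    push_neg at h
    have hz : ∀ y, π y = (fun _ => (0:ℝ)) y := fun y => le_antisymm (h y) (hπnn y)
    rw [tsum_congr hz, tsum_zero] at hπ1
    norm_num at hπ1
  have hπsum : Summable π := by
    by_contra h
    rw [tsum_eq_zero_of_not_summable h] at hπ1
    norm_num at hπ1
  -- eventually the mass is positive and the row is summable
  have hgood : ∀ᶠ n : ℕ in atTop,
      0 < ∑' z, Kpow K n x z ∧ Summable (fun z => Kpow K n x z) := by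
    have h1 : ∀ᶠ n : ℕ in atTop, π y₀ / 2 < Kpow K n x y₀ / ∑' z, Kpow K n x z :=
      (hyag y₀).eventually (eventually_gt_nhds (by linarith))
    filter_upwards [h1] with n hn
    have hspos : 0 < ∑' z, Kpow K n x z := by
      rcases (hs0 n).lt_or_eq with h | h
      · exact h
      · exfalso
        rw [← h, div_zero] at hn
        linarith
    refine ⟨hspos, ?_⟩
    by_contra hc
    rw [tsum_eq_zero_of_not_summable hc] at hspos
    exact absurd hspos (lt_irrefl 0)
  -- eventual positivity of every entry
  have hpos : ∀ y : S, ∀ᶠ n : ℕ in atTop, 0 < Kpow K n x y := by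
    intro y
    have h1 : ∀ᶠ n : ℕ in atTop, ρ / 2 < Kpow K n x y ^ ((n : ℝ)⁻¹) :=
      (hρ x y).eventually (eventually_gt_nhds (by linarith))
    filter_upwards [h1, eventually_ge_atTop 1] with n hn hn1
    rcases (hKnn n x y).lt_or_eq with h | h
    · exact h
    · exfalso
      rw [← h, Real.zero_rpow (inv_ne_zero (Nat.cast_ne_zero.mpr (by omega)))] at hn
      linarith
  -- positivity implies the defining series is summable
  have hexact : ∀ (n : ℕ) (y : S), 0 < Kpow K (n + 1) x y →
      Summable (fun w => Kpow K n x w * K w y) := by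
    intro n y h
    by_contra hc
    rw [Kpow_succ, tsum_eq_zero_of_not_summable hc] at h
    exact absurd h (lt_irrefl 0)
  -- the total mass has n-th root converging to ρ
  have hsroot : Tendsto (fun n : ℕ => (∑' z, Kpow K n x z) ^ ((n : ℝ)⁻¹)) atTop (𝓝 ρ) := by
    have hflim : Tendsto
        (fun n : ℕ => (Kpow K n x y₀ / ∑' z, Kpow K n x z) ^ ((n : ℝ)⁻¹)) atTop (𝓝 1) := by
      apply tendsto_of_tendsto_of_tendsto_of_le_of_le'
        (tendsto_rpow_inv_nat_one (π y₀ / 2) (by linarith)) tendsto_const_nhds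
      · filter_upwards [(hyag y₀).eventually (eventually_gt_nhds
          (show π y₀ / 2 < π y₀ by linarith))] with n hn
        exact Real.rpow_le_rpow (by linarith) hn.le (by positivity)
      · filter_upwards [hgood] with n hn
        have hle1 : Kpow K n x y₀ / ∑' z, Kpow K n x z ≤ 1 := by
          rw [div_le_one hn.1]
          exact Summable.le_tsum hn.2 y₀ fun j _ => hKnn n x j
        exact Real.rpow_le_one (div_nonneg (hKnn n x y₀) (hs0 n)) hle1 (by positivity)
    have hmain : Tendsto (fun n : ℕ => Kpow K n x y₀ ^ ((n : ℝ)⁻¹) /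
        (Kpow K n x y₀ / ∑' z, Kpow K n x z) ^ ((n : ℝ)⁻¹)) atTop (𝓝 ρ) := by
      simpa [Pi.div_def] using (hρ x y₀).div hflim one_ne_zero
    refine Filter.Tendsto.congr' ?_ hmain
    filter_upwards [hgood, hpos y₀] with n hn hp
    have ha : Kpow K n x y₀ ^ ((n : ℝ)⁻¹) ≠ 0 := ne_of_gt (Real.rpow_pos_of_pos hp _)
    rw [Real.div_rpow (hKnn n x y₀) (hs0 n), div_div_eq_mul_div, mul_div_cancel_left₀ _ ha]
  -- the survival ratios are frequently bounded
  have hfreq : ∃ᶠ n : ℕ in atTop,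
      (∑' z, Kpow K (n + 1) x z) / (∑' z, Kpow K n x z) ∈ Set.Icc (0 : ℝ) (ρ + 1) := by
    by_contra h
    rw [Filter.not_frequently] at h
    have h2 : ∀ᶠ n : ℕ in atTop,
        ρ + 1 < (∑' z, Kpow K (n + 1) x z) / (∑' z, Kpow K n x z) := by
      filter_upwards [h] with n hn
      rcases lt_or_ge (ρ + 1) ((∑' z, Kpow K (n + 1) x z) / (∑' z, Kpow K n x z)) with h' | h'
      · exact h'
      · exact absurd ⟨div_nonneg (hs0 _) (hs0 _), h'⟩ hn
    obtain ⟨N, hN⟩ := eventually_atTop.mp (h2.and hgood)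
    have hgrow : ∀ n, N ≤ n →
        (ρ + 1) * ∑' z, Kpow K n x z ≤ ∑' z, Kpow K (n + 1) x z := by
      intro n hn
      exact ((lt_div_iff₀ (hN n hn).2.1).mp (hN n hn).1).le
    have := root_ge_of_ratio (fun n => ∑' z, Kpow K n x z) hs0 (ρ + 1) (by linarith) N
      (hN N le_rfl).2.1 hgrow ρ hsroot
    linarith
  -- extract a convergent subsequence of the ratios
  obtain ⟨ℓ, hℓmem, φ, hφ, hφlim⟩ :=
    tendsto_subseq_of_frequently_bounded (Metric.isBounded_Icc (0 : ℝ) (ρ + 1)) hfreq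
  rw [isClosed_Icc.closure_eq] at hℓmem
  have hφat : Tendsto φ atTop atTop := hφ.tendsto_atTop
  have hφ1at : Tendsto (fun k => φ k + 1) atTop atTop :=
    tendsto_atTop_mono (fun k => Nat.le_succ (φ k)) hφat
  -- the key inequality:  π v K(v,u) ≤ ℓ π u  for all v, u
  have hkey : ∀ v u : S, π v * K v u ≤ ℓ * π u := by
    intro v u
    have hineq : ∀ᶠ k : ℕ in atTop,
        (Kpow K (φ k) x v / ∑' z, Kpow K (φ k) x z) * K v u ≤
          (Kpow K (φ k + 1) x u / ∑' z, Kpow K (φ k + 1) x z) *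
            ((∑' z, Kpow K (φ k + 1) x z) / ∑' z, Kpow K (φ k) x z) := by
      filter_upwards [hφ1at.eventually (hpos u), hφat.eventually hgood,
        hφ1at.eventually hgood] with k h1 h2 h3
      have hterm : Kpow K (φ k) x v * K v u ≤ Kpow K (φ k + 1) x u := by
        have h4 := Summable.le_tsum (hexact (φ k) u h1) v fun j _ =>
          mul_nonneg (hKnn (φ k) x j) (hnn j u)
        rw [← Kpow_succ K (φ k) x u] at h4
        exact h4
      have he2 : (Kpow K (φ k + 1) x u / ∑' z, Kpow K (φ k + 1) x z) *
          ((∑' z, Kpow K (φ k + 1) x z) / ∑' z, Kpow K (φ k) x z)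
          = Kpow K (φ k + 1) x u / ∑' z, Kpow K (φ k) x z := by
        have hne := h3.1.ne'
        field_simp
      rw [he2]
      have he1 : (Kpow K (φ k) x v / ∑' z, Kpow K (φ k) x z) * K v u
          = Kpow K (φ k) x v * K v u / ∑' z, Kpow K (φ k) x z := by ring
      rw [he1]
      exact (div_le_div_iff_of_pos_right h2.1).mpr hterm
    have hT1 : Tendsto (fun k => (Kpow K (φ k) x v / ∑' z, Kpow K (φ k) x z) * K v u)
        atTop (𝓝 (π v * K v u)) := ((hyag v).comp hφat).mul_const (K v u)
    have hT2 : Tendsto (fun k => (Kpow K (φ k + 1) x u / ∑' z, Kpow K (φ k + 1) x z) *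
        ((∑' z, Kpow K (φ k + 1) x z) / ∑' z, Kpow K (φ k) x z)) atTop (𝓝 (π u * ℓ)) :=
      ((hyag u).comp hφ1at).mul hφlim
    exact (le_of_tendsto_of_tendsto hT1 hT2 hineq).trans_eq (mul_comm _ _)
  -- ℓ is positive
  obtain ⟨y₁, hy₁⟩ := row_ne_zero K hnn haper y₀
  have hℓpos : 0 < ℓ := by
    rcases hℓmem.1.lt_or_eq with h | h
    · exact h
    · exfalso
      have h2 := hkey y₀ y₁
      rw [← h, zero_mul] at h2
      nlinarith [mul_pos hy₀ hy₁]
  -- π is positive everywhere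
  have hedge : ∀ v u : S, 0 < π v → 0 < K v u → 0 < π u := by
    intro v u hv hK
    rcases (hπnn u).lt_or_eq with h | h
    · exact h
    · exfalso
      have h2 := hkey v u
      rw [← h, mul_zero] at h2
      nlinarith [mul_pos hv hK]
  have hprop : ∀ (n : ℕ) (v u : S), 0 < π v → 0 < Kpow K n v u → 0 < π u := by
    intro n
    induction n with
    | zero =>
        intro v u hv hK
        by_cases h : v = u
        · subst h; exact hv
        · simp only [Kpow] at hK
          rw [if_neg h] at hK
          exact absurd hK (lt_irrefl 0)
    | succ n ih =>
        intro v u hv hK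
        rw [Kpow_succ] at hK
        have hex : ∃ z, Kpow K n v z * K z u ≠ (fun _ => (0:ℝ)) z := by
          by_contra hzz
          push_neg at hzz
          rw [tsum_congr hzz, tsum_zero] at hK
          exact absurd hK (lt_irrefl 0)
        obtain ⟨z, hz⟩ := hex
        rw [mul_ne_zero_iff] at hz
        exact hedge z u (ih v z hv (lt_of_le_of_ne (hKnn n v z) (Ne.symm hz.1)))
          (lt_of_le_of_ne (hnn z u) (Ne.symm hz.2))
  have hπpos : ∀ u, 0 < π u := by
    intro u
    obtain ⟨n, hn⟩ := hirr y₀ u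
    exact hprop n y₀ u hy₀ hn
  -- all rows of K are summable
  have hrow : ∀ w, Summable (fun y => K w y) := by
    intro w
    refine Summable.of_nonneg_of_le (fun y => hnn w y) (fun y => ?_) (hπsum.mul_left (ℓ / π w))
    rw [div_mul_eq_mul_div, le_div_iff₀ (hπpos w)]
    calc K w y * π w = π w * K w y := mul_comm _ _
      _ ≤ ℓ * π y := hkey w y
  have ha0 : ∀ w, 0 ≤ ∑' y, K w y := fun w => tsum_nonneg (hnn w)
  -- the basic identity for the total mass
  have hiden : ∀ n : ℕ, Summable (fun z => Kpow K n x z) →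
      (∑' z, Kpow K (n + 1) x z) = ∑' w, Kpow K n x w * ∑' y, K w y := by
    intro n hsum
    have h1 : ∀ w, Summable (fun y => Kpow K n x w * K w y) := fun w => (hrow w).mul_left _
    have h2 : Summable (fun w => Kpow K n x w * ∑' y, K w y) := by
      refine Summable.of_nonneg_of_le (fun w => mul_nonneg (hKnn n x w) (ha0 w))
        (fun w => ?_) hsum
      exact mul_le_of_le_one_right (hKnn n x w) (hsub w)
    have hF : Summable (Function.uncurry fun w y => Kpow K n x w * K w y) :=
      (summable_prod_of_nonneg (f := Function.uncurry fun w y => Kpow K n x w * K w y)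
        (fun p => mul_nonneg (hKnn n x p.1) (hnn p.1 p.2))).mpr
        ⟨fun w => by simpa only [Function.uncurry] using h1 w,
          by simpa only [Function.uncurry, tsum_mul_left] using h2⟩
    have e1 : (∑' z, Kpow K (n + 1) x z) = ∑' y, ∑' w, Kpow K n x w * K w y :=
      tsum_congr fun y => Kpow_succ K n x y
    rw [e1, Summable.tsum_comm' hF h1 fun y => hF.prod_symm.prod_factor y]
    exact tsum_congr fun w => tsum_mul_left
  -- Scheffé: the truncated masses converge to 1
  have hmsum : ∀ n : ℕ, Summable (fun w => min (Kpow K n x w / ∑' z, Kpow K n x z) (π w)) := by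
    intro n
    exact Summable.of_nonneg_of_le
      (fun w => le_min (div_nonneg (hKnn n x w) (hs0 n)) (hπnn w))
      (fun w => min_le_right _ _) hπsum
  have hmten : Tendsto
      (fun n : ℕ => ∑' w, min (Kpow K n x w / ∑' z, Kpow K n x z) (π w)) atTop (𝓝 1) := by
    rw [Metric.tendsto_atTop]
    intro ε hε
    have hhs : HasSum π 1 := hπ1 ▸ hπsum.hasSum
    obtain ⟨F, hF⟩ := (hhs.eventually (eventually_gt_nhds (by linarith : 1 - ε / 2 < 1))).exists
    have hconv : Tendsto (fun n : ℕ => ∑ w ∈ F, min (Kpow K n x w / ∑' z, Kpow K n x z) (π w))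
        atTop (𝓝 (∑ w ∈ F, π w)) := by
      refine tendsto_finset_sum F fun w _ => ?_
      simpa [min_self] using ((hyag w).min (tendsto_const_nhds (x := π w)))
    have h2 : ∀ᶠ n : ℕ in atTop, ∑ w ∈ F, π w - ε / 2 <
        ∑ w ∈ F, min (Kpow K n x w / ∑' z, Kpow K n x z) (π w) :=
      hconv.eventually (eventually_gt_nhds (by linarith))
    obtain ⟨N, hN⟩ := eventually_atTop.mp (h2.and hgood)
    refine ⟨N, fun n hn => ?_⟩
    obtain ⟨h3, h4, h5⟩ := hN n hn
    have hfsum : Summable (fun w => Kpow K n x w / ∑' z, Kpow K n x z) := h5.div_const _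
    have hone : ∑' w, Kpow K n x w / ∑' z, Kpow K n x z = 1 := by
      rw [tsum_div_const]
      exact div_self h4.ne'
    have h6 : ∑ w ∈ F, min (Kpow K n x w / ∑' z, Kpow K n x z) (π w) ≤
        ∑' w, min (Kpow K n x w / ∑' z, Kpow K n x z) (π w) :=
      Summable.sum_le_tsum F (fun w _ => le_min (div_nonneg (hKnn n x w) (hs0 n)) (hπnn w)) (hmsum n)
    have h7 : ∑' w, min (Kpow K n x w / ∑' z, Kpow K n x z) (π w) ≤
        ∑' w, Kpow K n x w / ∑' z, Kpow K n x z :=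
      Summable.tsum_le_tsum (fun w => min_le_left _ _) (hmsum n) hfsum
    rw [Real.dist_eq, abs_lt]
    constructor
    · linarith
    · linarith
  -- convergence of the ratios to L
  have hLsum : Summable (fun w => π w * ∑' y, K w y) :=
    Summable.of_nonneg_of_le (fun w => mul_nonneg (hπnn w) (ha0 w))
      (fun w => mul_le_of_le_one_right (hπnn w) (hsub w)) hπsum
  have hrL : Tendsto (fun n : ℕ => (∑' z, Kpow K (n + 1) x z) / (∑' z, Kpow K n x z))
      atTop (𝓝 (∑' w, π w * ∑' y, K w y)) := by
    have hup : ∀ᶠ n : ℕ in atTop,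
        (∑' w, π w * ∑' y, K w y) -
            (1 - ∑' w, min (Kpow K n x w / ∑' z, Kpow K n x z) (π w)) ≤
          (∑' z, Kpow K (n + 1) x z) / (∑' z, Kpow K n x z) ∧
        (∑' z, Kpow K (n + 1) x z) / (∑' z, Kpow K n x z) ≤
          (∑' w, π w * ∑' y, K w y) +
            (1 - ∑' w, min (Kpow K n x w / ∑' z, Kpow K n x z) (π w)) := by
      filter_upwards [hgood] with n hn
      obtain ⟨hsn, hsum⟩ := hn
      have hid := hiden n hsum
      have hfnn : ∀ w : S, 0 ≤ Kpow K n x w / ∑' z, Kpow K n x z :=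
        fun w => div_nonneg (hKnn n x w) (hs0 n)
      have hfsum : Summable (fun w => Kpow K n x w / ∑' z, Kpow K n x z) := hsum.div_const _
      have hfs1 : ∑' w, Kpow K n x w / ∑' z, Kpow K n x z = 1 := by
        rw [tsum_div_const]
        exact div_self hsn.ne'
      have hmn : ∀ w : S, 0 ≤ min (Kpow K n x w / ∑' z, Kpow K n x z) (π w) :=
        fun w => le_min (hfnn w) (hπnn w)
      have hms := hmsum n
      -- r_n as a weighted sum
      have hr_eq : (∑' z, Kpow K (n + 1) x z) / (∑' z, Kpow K n x z) =
          ∑' w, (Kpow K n x w / ∑' z, Kpow K n x z) * ∑' y, K w y := by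
        rw [hid, ← tsum_div_const]
        exact tsum_congr fun w => by ring
      -- summabilities of the pieces
      have hsub1 : Summable (fun w => Kpow K n x w / (∑' z, Kpow K n x z) -
          min (Kpow K n x w / ∑' z, Kpow K n x z) (π w)) := hfsum.sub hms
      have hsub2 : Summable (fun w => π w -
          min (Kpow K n x w / ∑' z, Kpow K n x z) (π w)) := hπsum.sub hms
      have hp1 : Summable (fun w => (Kpow K n x w / (∑' z, Kpow K n x z) -
          min (Kpow K n x w / ∑' z, Kpow K n x z) (π w)) * ∑' y, K w y) := by
        refine Summable.of_nonneg_of_le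
          (fun w => mul_nonneg (by simp [min_le_left]) (ha0 w)) (fun w => ?_) hsub1
        exact mul_le_of_le_one_right (by simp [min_le_left]) (hsub w)
      have hp2 : Summable (fun w => (π w -
          min (Kpow K n x w / ∑' z, Kpow K n x z) (π w)) * ∑' y, K w y) := by
        refine Summable.of_nonneg_of_le
          (fun w => mul_nonneg (by simp [min_le_right]) (ha0 w)) (fun w => ?_) hsub2
        exact mul_le_of_le_one_right (by simp [min_le_right]) (hsub w)
      have hp3 : Summable (fun w =>
          min (Kpow K n x w / ∑' z, Kpow K n x z) (π w) * ∑' y, K w y) := by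
        refine Summable.of_nonneg_of_le (fun w => mul_nonneg (hmn w) (ha0 w))
          (fun w => ?_) hms
        exact mul_le_of_le_one_right (hmn w) (hsub w)
      -- decomposition of r_n and of L
      have hd1 : ∑' w, (Kpow K n x w / ∑' z, Kpow K n x z) * ∑' y, K w y =
          (∑' w, (Kpow K n x w / (∑' z, Kpow K n x z) -
            min (Kpow K n x w / ∑' z, Kpow K n x z) (π w)) * ∑' y, K w y) +
          ∑' w, min (Kpow K n x w / ∑' z, Kpow K n x z) (π w) * ∑' y, K w y := by
        rw [← Summable.tsum_add hp1 hp3]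
        exact tsum_congr fun w => by ring
      have hd2 : (∑' w, π w * ∑' y, K w y) =
          (∑' w, (π w - min (Kpow K n x w / ∑' z, Kpow K n x z) (π w)) * ∑' y, K w y) +
          ∑' w, min (Kpow K n x w / ∑' z, Kpow K n x z) (π w) * ∑' y, K w y := by
        rw [← Summable.tsum_add hp2 hp3]
        exact tsum_congr fun w => by ring
      -- bounds for the two correction terms
      have hb1 : (∑' w, (Kpow K n x w / (∑' z, Kpow K n x z) -
          min (Kpow K n x w / ∑' z, Kpow K n x z) (π w)) * ∑' y, K w y) ≤
          1 - ∑' w, min (Kpow K n x w / ∑' z, Kpow K n x z) (π w) := by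
        have := Summable.tsum_le_tsum (f := fun w => (Kpow K n x w / (∑' z, Kpow K n x z) -
            min (Kpow K n x w / ∑' z, Kpow K n x z) (π w)) * ∑' y, K w y)
          (g := fun w => Kpow K n x w / (∑' z, Kpow K n x z) -
            min (Kpow K n x w / ∑' z, Kpow K n x z) (π w))
          (fun w => mul_le_of_le_one_right (by simp [min_le_left]) (hsub w)) hp1 hsub1
        rw [Summable.tsum_sub hfsum hms, hfs1] at this
        exact this
      have hb2 : (∑' w, (π w - min (Kpow K n x w / ∑' z, Kpow K n x z) (π w)) * ∑' y, K w y) ≤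
          1 - ∑' w, min (Kpow K n x w / ∑' z, Kpow K n x z) (π w) := by
        have := Summable.tsum_le_tsum (f := fun w =>
            (π w - min (Kpow K n x w / ∑' z, Kpow K n x z) (π w)) * ∑' y, K w y)
          (g := fun w => π w - min (Kpow K n x w / ∑' z, Kpow K n x z) (π w))
          (fun w => mul_le_of_le_one_right (by simp [min_le_right]) (hsub w)) hp2 hsub2
        rw [Summable.tsum_sub hπsum hms, hπ1] at this
        exact this
      have hb3 : 0 ≤ ∑' w, (Kpow K n x w / (∑' z, Kpow K n x z) -
          min (Kpow K n x w / ∑' z, Kpow K n x z) (π w)) * ∑' y, K w y :=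
        tsum_nonneg fun w => mul_nonneg (by simp [min_le_left]) (ha0 w)
      have hb4 : 0 ≤ ∑' w, (π w - min (Kpow K n x w / ∑' z, Kpow K n x z) (π w)) *
          ∑' y, K w y :=
        tsum_nonneg fun w => mul_nonneg (by simp [min_le_right]) (ha0 w)
      constructor
      · rw [hr_eq, hd1, hd2]
        linarith
      · rw [hr_eq, hd1, hd2]
        linarith
    have hlow : Tendsto (fun n : ℕ => (∑' w, π w * ∑' y, K w y) -
        (1 - ∑' w, min (Kpow K n x w / ∑' z, Kpow K n x z) (π w))) atTop
        (𝓝 (∑' w, π w * ∑' y, K w y)) := by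
      have h1 : Tendsto (fun n : ℕ =>
          (1:ℝ) - ∑' w, min (Kpow K n x w / ∑' z, Kpow K n x z) (π w)) atTop (𝓝 0) := by
        simpa using hmten.const_sub 1
      simpa using h1.const_sub (∑' w, π w * ∑' y, K w y)
    have hhigh : Tendsto (fun n : ℕ => (∑' w, π w * ∑' y, K w y) +
        (1 - ∑' w, min (Kpow K n x w / ∑' z, Kpow K n x z) (π w))) atTop
        (𝓝 (∑' w, π w * ∑' y, K w y)) := by
      have h1 : Tendsto (fun n : ℕ =>
          (1:ℝ) - ∑' w, min (Kpow K n x w / ∑' z, Kpow K n x z) (π w)) atTop (𝓝 0) := by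
        simpa using hmten.const_sub 1
      simpa using h1.const_add (∑' w, π w * ∑' y, K w y)
    exact tendsto_of_tendsto_of_tendsto_of_le_of_le' hlow hhigh
      (hup.mono fun n h => h.1) (hup.mono fun n h => h.2)
  -- identify the limit with ℓ, hence it is positive
  have hLℓ : (∑' w, π w * ∑' y, K w y) = ℓ := tendsto_nhds_unique (hrL.comp hφat) hφlim
  have hLpos : 0 < ∑' w, π w * ∑' y, K w y := hLℓ ▸ hℓpos
  -- pinching: the limit equals ρ
  have hρL : ρ = ∑' w, π w * ∑' y, K w y := by
    set L : ℝ := ∑' w, π w * ∑' y, K w y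
    have hle : ∀ ε : ℝ, 0 < ε → ρ ≤ L + ε := by
      intro ε hε
      obtain ⟨N, hN⟩ := eventually_atTop.mp
        ((hrL.eventually (eventually_lt_nhds (by linarith : L < L + ε))).and hgood)
      refine root_le_of_ratio (fun n => ∑' z, Kpow K n x z) hs0 (L + ε) (by linarith) N
        (hN N le_rfl).2.1 ?_ ρ hsroot
      intro n hn
      exact ((div_lt_iff₀ (hN n hn).2.1).mp (hN n hn).1).le
    have hge : ∀ ε : ℝ, 0 < ε → ε < L → L - ε ≤ ρ := by
      intro ε hε hεL
      obtain ⟨N, hN⟩ := eventually_atTop.mp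
        ((hrL.eventually (eventually_gt_nhds (by linarith : L - ε < L))).and hgood)
      refine root_ge_of_ratio (fun n => ∑' z, Kpow K n x z) hs0 (L - ε) (by linarith) N
        (hN N le_rfl).2.1 ?_ ρ hsroot
      intro n hn
      exact ((lt_div_iff₀ (hN n hn).2.1).mp (hN n hn).1).le
    have h1 : ρ ≤ L := by
      by_contra hc
      push_neg at hc
      have := hle ((ρ - L) / 2) (by linarith)
      linarith
    have h2 : L ≤ ρ := by
      by_contra hc
      push_neg at hc
      have hm1 : (0:ℝ) < min ((L - ρ) / 2) (L / 2) := lt_min (by linarith) (by linarith)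
      have hm2 : min ((L - ρ) / 2) (L / 2) < L := lt_of_le_of_lt (min_le_right _ _) (by linarith)
      have h3 := hge _ hm1 hm2
      have h4 := min_le_left ((L - ρ) / 2) (L / 2)
      linarith
    linarith
  rw [hρL]
  exact hrL
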